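/- Let ψ : ℝ² × (0,∞) → ℝ be defined by ψ(η₁,η₂,η₃) = ½(η₁² + η₂²) + ¼ η₃ ln η₃. Then: (a) the matrix of second partial derivatives of ψ at η is diag(1, 1, 1/(4η₃)), and for all x, y ∈ ℝ, z > 0, with J = diag(1,1,2z) the Jacobian of (x,y,z) ↦ (x, y, z²), one has Jᵀ · Hess ψ(x, y, z²) · J equal to the 3×3 identity matrix; (b) ∇ψ(η) = (η₁, η₂, ¼ ln η₃ + ¼) and ⟨∇ψ(η), η⟩ − ψ(η) = ½(η₁² + η₂²) + ¼η₃. (This is the Smorodinski–Winternitz system (IIa), whose Hessian structure is not self-dual.) -/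

import Mathlib

open Real Set Matrix

/-- The Hessian potential of the Smorodinski–Winternitz system (IIa)
in its Hessian coordinates. -/
noncomputable def ψ (a b c : ℝ) : ℝ := (a ^ 2 + b ^ 2) / 2 + c * log c / 4

/-- Partial derivative with respect to the first variable. -/
noncomputable def d1 (f : ℝ → ℝ → ℝ → ℝ) (a b c : ℝ) : ℝ := deriv (fun s => f s b c) a

/-- Partial derivative with respect to the second variable. -/
noncomputable def d2 (f : ℝ → ℝ → ℝ → ℝ) (a b c : ℝ) : ℝ := deriv (fun s => f a s c) b

/-- Partial derivative with respect to the third variable. -/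
noncomputable def d3 (f : ℝ → ℝ → ℝ → ℝ) (a b c : ℝ) : ℝ := deriv (fun s => f a b s) c

/-- The matrix of second partial derivatives of a function of three variables. -/
noncomputable def Hess (f : ℝ → ℝ → ℝ → ℝ) (a b c : ℝ) : Matrix (Fin 3) (Fin 3) ℝ :=
  !![d1 (d1 f) a b c, d1 (d2 f) a b c, d1 (d3 f) a b c;
     d2 (d1 f) a b c, d2 (d2 f) a b c, d2 (d3 f) a b c;
     d3 (d1 f) a b c, d3 (d2 f) a b c, d3 (d3 f) a b c]

/-- The Jacobian matrix of the coordinate change `(x,y,z) ↦ (x, y, z²)`. -/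
noncomputable def J (z : ℝ) : Matrix (Fin 3) (Fin 3) ℝ :=
  !![1, 0, 0; 0, 1, 0; 0, 0, 2 * z]

lemma hd1 (a b c : ℝ) : d1 ψ a b c = a := by
  have h : HasDerivAt (fun s : ℝ => (s ^ 2 + b ^ 2) / 2 + c * log c / 4) a a := by
    have := ((hasDerivAt_pow 2 a).add_const (b ^ 2)).div_const 2
    simpa using this.add_const (c * log c / 4)
  exact h.deriv

lemma hd2 (a b c : ℝ) : d2 ψ a b c = b := by
  have h : HasDerivAt (fun s : ℝ => (a ^ 2 + s ^ 2) / 2 + c * log c / 4) b b := by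
    have := ((hasDerivAt_pow 2 b).const_add (a ^ 2)).div_const 2
    simpa using this.add_const (c * log c / 4)
  exact h.deriv

lemma hd3 (a b : ℝ) {c : ℝ} (hc : c ≠ 0) : d3 ψ a b c = (1/4) * log c + 1/4 := by
  have h : HasDerivAt (fun s : ℝ => (a ^ 2 + b ^ 2) / 2 + s * log s / 4)
      ((1/4) * log c + 1/4) c := by
    have := ((Real.hasDerivAt_mul_log hc).div_const 4).const_add ((a ^ 2 + b ^ 2) / 2)
    exact this.congr_deriv (by ring)
  exact h.deriv

lemma h11 (a b c : ℝ) : d1 (d1 ψ) a b c = 1 := by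
  have : d1 (d1 ψ) a b c = deriv (fun s : ℝ => s) a := by
    rw [d1]; congr 1; funext s; exact hd1 s b c
  simp [this]

lemma h12 (a b c : ℝ) : d1 (d2 ψ) a b c = 0 := by
  have : (fun s => d2 ψ s b c) = fun _ : ℝ => b := funext fun s => hd2 s b c
  simp [d1, this]

lemma h13 (a b : ℝ) {c : ℝ} (hc : c ≠ 0) : d1 (d3 ψ) a b c = 0 := by
  have : (fun s => d3 ψ s b c) = fun _ : ℝ => (1/4) * log c + 1/4 :=
    funext fun s => hd3 s b hc
  simp [d1, this]

lemma h21 (a b c : ℝ) : d2 (d1 ψ) a b c = 0 := by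
  have : (fun s => d1 ψ a s c) = fun _ : ℝ => a := funext fun s => hd1 a s c
  simp [d2, this]

lemma h22 (a b c : ℝ) : d2 (d2 ψ) a b c = 1 := by
  have : d2 (d2 ψ) a b c = deriv (fun s : ℝ => s) b := by
    rw [d2]; congr 1; funext s; exact hd2 a s c
  simp [this]

lemma h23 (a b : ℝ) {c : ℝ} (hc : c ≠ 0) : d2 (d3 ψ) a b c = 0 := by
  have : (fun s => d3 ψ a s c) = fun _ : ℝ => (1/4) * log c + 1/4 :=
    funext fun s => hd3 a s hc
  simp [d2, this]

lemma h31 (a b c : ℝ) : d3 (d1 ψ) a b c = 0 := by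
  have : (fun s => d1 ψ a b s) = fun _ : ℝ => a := funext fun s => hd1 a b s
  simp [d3, this]

lemma h32 (a b c : ℝ) : d3 (d2 ψ) a b c = 0 := by
  have : (fun s => d2 ψ a b s) = fun _ : ℝ => b := funext fun s => hd2 a b s
  simp [d3, this]

lemma h33 (a b : ℝ) {c : ℝ} (hc : 0 < c) : d3 (d3 ψ) a b c = 1 / (4 * c) := by
  have heq : (fun s => d3 ψ a b s) =ᶠ[nhds c] fun s : ℝ => (1/4) * log s + 1/4 := by
    filter_upwards [eventually_ne_nhds hc.ne'] with s hs
    exact hd3 a b hs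
  have h : HasDerivAt (fun s : ℝ => (1/4) * log s + 1/4) (1 / (4 * c)) c := by
    have := ((Real.hasDerivAt_log hc.ne').const_mul (1/4)).add_const (1/4 : ℝ)
    exact this.congr_deriv (by ring)
  rw [d3, heq.deriv_eq, h.deriv]

lemma hess_eq (a b : ℝ) {c : ℝ} (hc : 0 < c) :
    Hess ψ a b c = !![1, 0, 0; 0, 1, 0; 0, 0, 1 / (4 * c)] := by
  rw [Hess, h11, h12, h13 a b hc.ne', h21, h22, h23 a b hc.ne', h31, h32, h33 a b hc]

/-- Smorodinski–Winternitz system (IIa), `ψ(η) = ½(η₁² + η₂²) + ¼η₃ ln η₃`: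
(a) `Hess ψ(η) = diag(1, 1, 1/(4η₃))` and `(x, y, z²)` are Hessian coordinates
for Euclidean 3-space (`Jᵀ · Hess ψ(x,y,z²) · J = I₃`);
(b) the dual Hessian coordinates are `∇ψ(η) = (η₁, η₂, ¼ ln η₃ + ¼)` and the
dual Hessian potential is `⟨∇ψ(η), η⟩ − ψ(η) = ½(η₁² + η₂²) + ¼η₃`. -/
theorem sw_IIa_hessian_and_dual :
    (∀ a b c : ℝ, 0 < c →
      Hess ψ a b c = !![1, 0, 0; 0, 1, 0; 0, 0, 1 / (4 * c)]) ∧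
    (∀ x y z : ℝ, 0 < z →
      (J z)ᵀ * Hess ψ x y (z ^ 2) * J z = 1) ∧
    ∀ a b c : ℝ, 0 < c →
      d1 ψ a b c = a ∧
      d2 ψ a b c = b ∧
      d3 ψ a b c = (1 / 4) * log c + 1 / 4 ∧
      d1 ψ a b c * a + d2 ψ a b c * b + d3 ψ a b c * c - ψ a b c
        = (a ^ 2 + b ^ 2) / 2 + c / 4 := by

  refine ⟨fun a b c hc => hess_eq a b hc, fun x y z hz => ?_, fun a b c hc => ?_⟩
  · have hz2 : (0:ℝ) < z ^ 2 := by positivity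
    have hJ : (J z)ᵀ = J z := by
      unfold _root_.J; ext i j; fin_cases i <;> fin_cases j <;> rfl
    rw [hess_eq x y hz2, hJ]
    unfold _root_.J
    rw [Matrix.mul_fin_three, Matrix.mul_fin_three]
    have hz4 : (4 : ℝ) * z ^ 2 ≠ 0 := by positivity
    ext i j
    fin_cases i <;> fin_cases j <;>
      simp [Matrix.one_apply, Matrix.vecHead, Matrix.vecTail] <;> field_simp <;> ring
  · refine ⟨hd1 a b c, hd2 a b c, hd3 a b hc.ne', ?_⟩
    rw [hd1, hd2, hd3 a b hc.ne', ψ]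
    ring
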